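/- Let n, d ≥ 1 and let W be a word over the alphabet Fin l. If W contains n pairwise disjoint occurrences of one and the same word u of length n·d, then W is n-cancellable: W is n-divided or W contains a d-th power, i.e. v^d is a factor of W for some nonempty word v. -/

import Mathlib

open List Real

/-- A word over the alphabet `Fin l`. -/
abbrev Word (l : ℕ) : Type := List (Fin l)

/-- `u ≻ v`: at the first position where they differ (a position within the length of both),
the letter of `u` is greater than that of `v`. -/
def WGt {l : ℕ} (u v : Word l) : Prop :=
  ∃ (w u' v' : Word l) (a b : Fin l), b < a ∧ u = w ++ a :: u' ∧ v = w ++ b :: v'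

/-- `W` is `n`-divided: `W = W₀W₁⋯Wₙ` with `W₁, …, Wₙ` nonempty and `W₁ ≻ W₂ ≻ ⋯ ≻ Wₙ`. -/
def NDivided {l : ℕ} (n : ℕ) (W : Word l) : Prop :=
  ∃ (W₀ : Word l) (ws : List (Word l)), ws.length = n ∧ (∀ w ∈ ws, w ≠ []) ∧
    ws.Chain' WGt ∧ W = W₀ ++ ws.flatten

/-- `W` contains a `d`-th power of a nonempty word as a factor. -/
def ContainsPow {l : ℕ} (d : ℕ) (W : Word l) : Prop :=
  ∃ u : Word l, u ≠ [] ∧ (List.replicate d u).flatten <:+: W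

section AuxLemmas
variable {l : ℕ}

lemma wgt_iff {x y : Word l} : WGt x y ↔
    ∃ (L : ℕ) (h1 : L < x.length) (h2 : L < y.length),
      x.take L = y.take L ∧ y[L]'h2 < x[L]'h1 := by
  constructor
  · rintro ⟨w, u', v', a, b, hba, rfl, rfl⟩
    refine ⟨w.length, ?_, ?_, ?_, ?_⟩
    · simp
    · simp
    · simp [List.take_left]
    · simp [List.getElem_append_right (le_refl w.length)]
      exact hba
  · rintro ⟨L, h1, h2, htake, hlt⟩
    refine ⟨x.take L, x.drop (L+1), y.drop (L+1), x[L]'h1, y[L]'h2, hlt, ?_, ?_⟩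
    · conv_lhs => rw [← List.take_append_drop L x]
      rw [List.drop_eq_getElem_cons h1]
    · conv_lhs => rw [← List.take_append_drop L y]
      rw [List.drop_eq_getElem_cons h2, htake]

lemma wgt_irrefl (x : Word l) : ¬ WGt x x := by
  rw [wgt_iff]
  rintro ⟨L, h1, h2, -, hlt⟩
  exact lt_irrefl _ hlt

lemma getElem_take' (x : Word l) {L m : ℕ} (h : m < L) (h2 : m < x.length) :
    (x.take L)[m]'(by simp [h, h2]) = x[m]'h2 := by
  simp

lemma wgt_trans {x y z : Word l} (hxy : WGt x y) (hyz : WGt y z) : WGt x z := by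
  rw [wgt_iff] at *
  obtain ⟨L1, hx1, hy1, ht1, hlt1⟩ := hxy
  obtain ⟨L2, hy2, hz2, ht2, hlt2⟩ := hyz
  rcases lt_trichotomy L1 L2 with h | h | h
  · refine ⟨L1, hx1, by omega, ?_, ?_⟩
    · rw [ht1]
      have : y.take L1 = (y.take L2).take L1 := by
        rw [List.take_take, min_eq_left h.le]
      rw [this, ht2, List.take_take, min_eq_left h.le]
    · have hb1 : L1 < (y.take L2).length := by simp; omega
      have hb2 : L1 < (z.take L2).length := by simp; omega
      have e3 : (y.take L2)[L1]'hb1 = (z.take L2)[L1]'hb2 := by simp only [ht2]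
      have hzy : z[L1]'(by omega) = y[L1]'hy1 := by
        rw [← getElem_take' y h hy1, ← getElem_take' z h (by omega), e3]
      rw [hzy]; exact hlt1
  · subst h
    exact ⟨L1, hx1, hz2, by rw [ht1, ht2], lt_trans hlt2 hlt1⟩
  · refine ⟨L2, by omega, hz2, ?_, ?_⟩
    · have : x.take L2 = (x.take L1).take L2 := by
        rw [List.take_take, min_eq_left h.le]
      rw [this, ht1, List.take_take, min_eq_left h.le, ht2]
    · have hb1 : L2 < (x.take L1).length := by simp; omega
      have hb2 : L2 < (y.take L1).length := by simp; omega
      have e3 : (x.take L1)[L2]'hb1 = (y.take L1)[L2]'hb2 := by simp only [ht1]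
      have hxy' : x[L2]'(by omega) = y[L2]'hy2 := by
        rw [← getElem_take' x h (by omega), ← getElem_take' y h hy2, e3]
      rw [hxy']; exact hlt2

lemma wgt_cons {c : Fin l} {x y : Word l} (h : WGt x y) : WGt (c :: x) (c :: y) := by
  obtain ⟨w, u', v', a, b, hba, rfl, rfl⟩ := h
  exact ⟨c :: w, u', v', a, b, hba, rfl, rfl⟩

lemma wgt_dichotomy (x y : Word l) : x <+: y ∨ y <+: x ∨ WGt x y ∨ WGt y x := by
  induction x generalizing y with
  | nil => exact Or.inl (List.nil_prefix)
  | cons a x ih =>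
    cases y with
    | nil => exact Or.inr (Or.inl (List.nil_prefix))
    | cons b y =>
      rcases lt_trichotomy a b with h | h | h
      · exact Or.inr (Or.inr (Or.inr ⟨[], y, x, b, a, h, rfl, rfl⟩))
      · subst h
        rcases ih y with h | h | h | h
        · exact Or.inl (List.cons_prefix_cons.mpr ⟨rfl, h⟩)
        · exact Or.inr (Or.inl (List.cons_prefix_cons.mpr ⟨rfl, h⟩))
        · exact Or.inr (Or.inr (Or.inl (wgt_cons h)))
        · exact Or.inr (Or.inr (Or.inr (wgt_cons h)))
      · exact Or.inr (Or.inr (Or.inl ⟨[], x, y, a, b, h, rfl, rfl⟩))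

lemma wgt_extend {a b a' b' : Word l} (h : WGt a b) (ha : a <+: a') (hb : b <+: b') :
    WGt a' b' := by
  obtain ⟨w, u', v', c, e, hce, rfl, rfl⟩ := h
  obtain ⟨s, rfl⟩ := ha
  obtain ⟨t, rfl⟩ := hb
  exact ⟨w, u' ++ s, v' ++ t, c, e, hce, by simp, by simp⟩

lemma prefix_drop {x y : List (Fin l)} (m : ℕ) (h : x <+: y) (hm : m ≤ x.length) :
    x.drop m <+: y.drop m := by
  obtain ⟨s, rfl⟩ := h
  exact ⟨s, by rw [List.drop_append_of_le_length hm]⟩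

lemma selfoverlap {t : ℕ} (ht : 0 < t) :
    ∀ (m : ℕ) (z : List (Fin l)), z.drop t <+: z → m * t ≤ z.length →
      (List.replicate m (z.take t)).flatten <+: z := by
  intro m
  induction m with
  | zero => intro z _ _; simp
  | succ m ih =>
    intro z hz hlen
    have ht' : t ≤ z.length := by
      have : t ≤ (m+1) * t := by nlinarith
      omega
    rw [List.replicate_succ, List.flatten_cons]
    conv_rhs => rw [← List.take_append_drop t z]
    apply (List.prefix_append_right_inj (z.take t)).mpr
    rcases Nat.eq_zero_or_pos m with hm | hm
    · subst hm; simp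
    · have hzt : t ≤ (z.drop t).length := by
        simp only [List.length_drop]
        have : 2 * t ≤ (m+1) * t := by nlinarith
        omega
      have h1 : (z.drop t).drop t <+: z.drop t := by
        obtain ⟨s, hs⟩ := hz
        have key : z.drop t = (z.drop t).drop t ++ s := by
          nth_rewrite 1 [← hs]
          rw [List.drop_append_of_le_length hzt]
        exact ⟨s, key.symm⟩
      have h2 : m * t ≤ (z.drop t).length := by
        simp only [List.length_drop]
        have : (m+1) * t = m * t + t := by ring
        omega
      have h3 := ih (z.drop t) h1 h2
      have h4 : (z.drop t).take t = z.take t := by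
        obtain ⟨s, hs⟩ := hz
        nth_rewrite 2 [← hs]
        rw [List.take_append_of_le_length hzt]
      rwa [h4] at h3

lemma build (W : Word l) :
    ∀ (rest : List (ℕ × Word l)) (x : ℕ × Word l),
      List.Chain' (fun a b => a.1 + a.2.length ≤ b.1 ∧ WGt a.2 b.2) (x :: rest) →
      (∀ y ∈ x :: rest, y.2 ≠ [] ∧ y.2 <+: W.drop y.1) →
      ∃ ws : List (Word l), ws.length = rest.length + 1 ∧ (∀ w ∈ ws, w ≠ []) ∧
        ws.Chain' WGt ∧ W.drop x.1 = ws.flatten ∧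
        ∃ h tl, ws = h :: tl ∧ x.2 <+: h := by
  intro rest
  induction rest with
  | nil =>
    intro x _ hmem
    obtain ⟨hne, hpre⟩ := hmem x (by simp)
    refine ⟨[W.drop x.1], by simp, ?_, List.isChain_singleton _, by simp, W.drop x.1, [], rfl, hpre⟩
    intro w hw
    simp only [List.mem_singleton] at hw
    subst hw
    intro h0
    rw [h0, List.prefix_nil] at hpre
    exact hne hpre
  | cons y rest' ih =>
    intro x hchain hmem
    rw [List.Chain', List.isChain_cons_cons] at hchain
    obtain ⟨⟨hle, hgt⟩, hchain'⟩ := hchain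
    obtain ⟨ws, hlen, hne, hch, hflat, h, tl, rfl, hpref⟩ :=
      ih y hchain' (fun z hz => hmem z (List.mem_cons_of_mem _ hz))
    obtain ⟨hx2, hx2p⟩ := hmem x (by simp)
    set c : Word l := (W.drop x.1).take (y.1 - x.1) with hc
    have hxlen : x.2.length ≤ y.1 - x.1 := by omega
    have hxc : x.2 <+: c := by
      have heq : x.2 = (W.drop x.1).take x.2.length := List.prefix_iff_eq_take.mp hx2p
      have : c.take x.2.length = x.2 := by
        rw [hc, List.take_take, min_eq_left hxlen, ← heq]
      rw [← this]
      exact List.take_prefix _ _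
    have hcne : c ≠ [] := by
      intro h0
      rw [h0, List.prefix_nil] at hxc
      exact hx2 hxc
    have hwgt : WGt c h := wgt_extend hgt hxc hpref
    refine ⟨c :: h :: tl, by simpa using hlen, ?_, ?_, ?_, c, h :: tl, rfl, hxc⟩
    · intro w hw
      rcases List.mem_cons.mp hw with rfl | hw
      · exact hcne
      · exact hne w hw
    · rw [List.Chain', List.isChain_cons_cons]
      exact ⟨hwgt, hch⟩
    · rw [List.flatten_cons, ← hflat, hc]
      have hxy : x.1 ≤ y.1 := by omega
      have : (W.drop x.1).drop (y.1 - x.1) = W.drop y.1 := by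
        rw [List.drop_drop]
        congr 1
        omega
      rw [← this, List.take_append_drop]

end AuxLemmas

theorem repeated_factor_cancellable (l n d : ℕ) (hn : 1 ≤ n) (hd : 1 ≤ d)
    (W u : Word l) (hu : u.length = n * d)
    (p : Fin n → ℕ)
    (hocc : ∀ i, u <+: W.drop (p i))
    (hdisj : ∀ i j : Fin n, i < j → p i + u.length ≤ p j) :
    NDivided n W ∨ ContainsPow d W := by
  have hnnd : n ≤ n * d := Nat.le_mul_of_pos_right n hd
  by_cases hcase : ∃ k k', k < k' ∧ k' < n ∧ u.drop k' <+: u.drop k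
  · -- power case
    right
    obtain ⟨k, k', hkk', hk'n, hpre⟩ := hcase
    set t := k' - k with htdef
    have ht : 0 < t := by omega
    set z := u.drop k with hzdef
    have hz : z.drop t <+: z := by
      rw [hzdef, List.drop_drop]
      have : k + t = k' := by omega
      rw [this]
      exact hpre
    have hzlen : z.length = n * d - k := by simp [hzdef, hu]
    have hdt : d * t ≤ z.length := by
      have h1 : d * t + d * k = d * k' := by
        rw [← Nat.mul_add]
        congr 1
        omega
      have h2 : k ≤ d * k := Nat.le_mul_of_pos_left k hd
      have h3 : d * k' + d ≤ d * n := by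
        have h3a : d * (k' + 1) ≤ d * n := Nat.mul_le_mul_left d (by omega)
        have h3b : d * (k' + 1) = d * k' + d := by ring
        omega
      have h4 : d * n = n * d := Nat.mul_comm d n
      omega
    have htz : t ≤ z.length := by
      have : t ≤ d * t := Nat.le_mul_of_pos_left t hd
      omega
    refine ⟨z.take t, ?_, ?_⟩
    · have : (z.take t).length = t := by
        rw [List.length_take]
        omega
      intro h0
      rw [h0] at this
      simp at this
      omega
    · have h5 : (List.replicate d (z.take t)).flatten <+: z := selfoverlap ht d z hz hdt
      have h6 : z <:+ u := List.drop_suffix k u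
      have h7 : u <:+: W := by
        obtain ⟨s, hs⟩ := hocc ⟨0, by omega⟩
        obtain ⟨pre, hpre2⟩ := W.drop_suffix (p ⟨0, by omega⟩)
        exact ⟨pre, s, by rw [← hpre2, ← hs]; simp⟩
    
      exact h5.isInfix.trans (h6.isInfix.trans h7)
  · -- divided case
    left
    classical
    push_neg at hcase
    -- comparability
    have hcmp : ∀ a b : Fin n, (a : ℕ) < (b : ℕ) →
        WGt (u.drop (a : ℕ)) (u.drop (b : ℕ)) ∨ WGt (u.drop (b : ℕ)) (u.drop (a : ℕ)) := by
      intro a b hab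
      rcases wgt_dichotomy (u.drop (a : ℕ)) (u.drop (b : ℕ)) with h | h | h | h
      · exfalso
        have := h.length_le
        rw [List.length_drop, List.length_drop, hu] at this
        have hb : (b : ℕ) < n * d := lt_of_lt_of_le b.isLt hnnd
        omega
      · exact absurd h (hcase _ _ hab b.isLt)
      · exact Or.inl h
      · exact Or.inr h
    have hcmp' : ∀ a b : Fin n, a ≠ b →
        WGt (u.drop (a : ℕ)) (u.drop (b : ℕ)) ∨ WGt (u.drop (b : ℕ)) (u.drop (a : ℕ)) := by
      intro a b hab
      rcases Nat.lt_trichotomy (a : ℕ) (b : ℕ) with h | h | h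
      · exact hcmp a b h
      · exact absurd (Fin.ext h) hab
      · exact (hcmp b a h).symm
    -- rank function
    set valF : Fin n → Fin n := fun k =>
      ⟨(Finset.univ.filter fun j : Fin n => WGt (u.drop (j : ℕ)) (u.drop (k : ℕ))).card, by
        have hsub : (Finset.univ.filter fun j : Fin n =>
            WGt (u.drop (j : ℕ)) (u.drop (k : ℕ))) ⊆ Finset.univ.erase k := by
          intro j hj
          rw [Finset.mem_filter] at hj
          rw [Finset.mem_erase]
          refine ⟨?_, Finset.mem_univ _⟩
          rintro rfl
          exact wgt_irrefl _ hj.2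
        have := Finset.card_le_card hsub
        rw [Finset.card_erase_of_mem (Finset.mem_univ _), Finset.card_univ, Fintype.card_fin]
          at this
        omega⟩ with hvalF
    have hmono : ∀ a b : Fin n, WGt (u.drop (a : ℕ)) (u.drop (b : ℕ)) → (valF a : ℕ) < valF b := by
      intro a b hab
      show (Finset.univ.filter fun j : Fin n => WGt (u.drop (j : ℕ)) (u.drop (a : ℕ))).card <
        (Finset.univ.filter fun j : Fin n => WGt (u.drop (j : ℕ)) (u.drop (b : ℕ))).card
      apply Finset.card_lt_card
      constructor
      · intro j hj
        rw [Finset.mem_filter] at hj ⊢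
        exact ⟨Finset.mem_univ _, wgt_trans hj.2 hab⟩
      · intro hsup
        have ha : a ∈ Finset.univ.filter fun j : Fin n =>
            WGt (u.drop (j : ℕ)) (u.drop (b : ℕ)) := by
          rw [Finset.mem_filter]
          exact ⟨Finset.mem_univ _, hab⟩
        have := hsup ha
        rw [Finset.mem_filter] at this
        exact wgt_irrefl _ this.2
    have hinj : Function.Injective valF := by
      intro a b heq
      by_contra hne
      rcases hcmp' a b hne with h | h
      · have := hmono a b h
        rw [heq] at this
        omega
      · have := hmono b a h
        rw [heq] at this
        omega
    have hbij : Function.Bijective valF := Finite.injective_iff_bijective.mp hinj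
    set e := Equiv.ofBijective valF hbij with he
    set g : Fin n → Fin n := fun i => e.symm i with hg
    have hgkey : ∀ i j : Fin n, i < j → WGt (u.drop ((g i : Fin n) : ℕ)) (u.drop ((g j : Fin n) : ℕ)) := by
      intro i j hij
      have hvi : valF (g i) = i := e.apply_symm_apply i
      have hvj : valF (g j) = j := e.apply_symm_apply j
      have hne : g i ≠ g j := by
        intro h0
        rw [← hvi, ← hvj, h0] at hij
        exact lt_irrefl _ hij
      rcases hcmp' (g i) (g j) hne with h | h
      · exact h
      · exfalso
        have := hmono _ _ h
        rw [hvi, hvj] at this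
        have : (j : ℕ) < (i : ℕ) := this
        omega
    -- cut positions
    obtain ⟨n', rfl⟩ : ∃ n', n = n' + 1 := ⟨n - 1, by omega⟩
    set G : ℕ → ℕ := fun k => if h : k < n' + 1 then ((g ⟨k, h⟩ : Fin (n' + 1)) : ℕ) else 0
      with hG
    set P : ℕ → ℕ := fun k => if h : k < n' + 1 then p ⟨k, h⟩ else 0 with hP
    set f : ℕ → ℕ × Word l := fun k => (P k + G k, u.drop (G k)) with hf
    have hGlt : ∀ k, k < n' + 1 → G k < n' + 1 := by
      intro k hk
      rw [hG]
      simp only [hk, dif_pos]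
      exact (g ⟨k, hk⟩).isLt
    have hL : (List.range (n' + 1)).map f = f 0 :: (List.range n').map (f ∘ Nat.succ) := by
      rw [List.range_succ_eq_map, List.map_cons, List.map_map]
    have hchain : List.Chain' (fun a b => a.1 + a.2.length ≤ b.1 ∧ WGt a.2 b.2)
        ((List.range (n' + 1)).map f) := by
      rw [List.Chain', List.isChain_map]
      rw [List.isChain_range_succ]
      intro m hm
      have hm1 : m < n' + 1 := by omega
      have hm2 : m + 1 < n' + 1 := by omega
      constructor
      · have hlen : (u.drop (G m)).length = n' * d + d - G m := by
          rw [List.length_drop, hu]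
          ring_nf
        have hGm : G m < n' + 1 := hGlt m hm1
        have hdisj' := hdisj ⟨m, hm1⟩ ⟨m + 1, hm2⟩ (by simp)
        rw [hu] at hdisj'
        have hPm : P m = p ⟨m, hm1⟩ := by rw [hP]; simp [hm1]
        have hPm1 : P (m + 1) = p ⟨m + 1, hm2⟩ := by rw [hP]; simp [hm2]
        simp only [hf]
        rw [hlen, hPm, hPm1]
        have : G m ≤ n' * d + d := by
          have : n' + 1 ≤ (n' + 1) * d := hnnd
          nlinarith [hGm]
        have h2 : (n' + 1) * d = n' * d + d := by ring
        omega
      · have := hgkey ⟨m, hm1⟩ ⟨m + 1, hm2⟩ (by simp)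
        simp only [hf]
        have e1 : G m = ((g ⟨m, hm1⟩ : Fin (n' + 1)) : ℕ) := by rw [hG]; simp [hm1]
        have e2 : G (m + 1) = ((g ⟨m + 1, hm2⟩ : Fin (n' + 1)) : ℕ) := by rw [hG]; simp [hm2]
        rw [e1, e2]
        exact this
    have hmem : ∀ y ∈ (List.range (n' + 1)).map f, y.2 ≠ [] ∧ y.2 <+: W.drop y.1 := by
      intro y hy
      rw [List.mem_map] at hy
      obtain ⟨k, hk, rfl⟩ := hy
      rw [List.mem_range] at hk
      have hGk : G k < n' + 1 := hGlt k hk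
      have hGku : G k ≤ u.length := by
        rw [hu]
        have : n' + 1 ≤ (n' + 1) * d := hnnd
        omega
      constructor
      · simp only [hf]
        intro h0
        have hlen0 := congrArg List.length h0
        rw [List.length_drop, hu] at hlen0
        simp at hlen0
        omega
      · simp only [hf]
        have hPk : P k = p ⟨k, hk⟩ := by rw [hP]; simp [hk]
        have h1 : u.drop (G k) <+: (W.drop (p ⟨k, hk⟩)).drop (G k) :=
          prefix_drop (G k) (hocc ⟨k, hk⟩) hGku
        rw [List.drop_drop] at h1
        rw [hPk]
        exact h1
    rw [hL] at hchain hmem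
    obtain ⟨ws, hlen, hne, hch, hflat, -⟩ := build W _ _ hchain hmem
    refine ⟨W.take ((f 0).1), ws, ?_, hne, hch, ?_⟩
    · rw [hlen, List.length_map, List.length_range]
    · rw [← hflat, List.take_append_drop]
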